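/- Let φ: A• → B• and ψ: B• → C• be continuous chain maps of complexes of abelian topological groups, where ψ is a topological embedding (i.e. B• is identified with a subcomplex of C• with the subspace topology). If the zero map 0• → C•/ψB• (into the quotient complex with quotient topology) is quasi-open, then ψ is quasi-open; if in addition ψφ is quasi-open, then φ is quasi-open. -/

import Mathlib

/-- A (ℤ-graded) cochain complex of abelian topological groups with continuous
differentials. -/
structure TopComplex where
  X : ℤ → Type
  [grp : ∀ n, AddCommGroup (X n)]
  [top : ∀ n, TopologicalSpace (X n)]
  [tgrp : ∀ n, IsTopologicalAddGroup (X n)]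
  d : ∀ n, X n →+ X (n + 1)
  d_cont : ∀ n, Continuous (d n)
  d_comp_d : ∀ n x, d (n + 1) (d n x) = 0

attribute [instance] TopComplex.grp TopComplex.top TopComplex.tgrp

/-- The group of `n`-cocycles, with the subspace topology. -/
abbrev TopComplex.Z (A : TopComplex) (n : ℤ) : Type := {a : A.X n // A.d n a = 0}

/-- A continuous chain map of complexes of abelian topological groups. -/
structure ChainMap (A B : TopComplex) where
  f : ∀ n, A.X n →+ B.X n
  cont : ∀ n, Continuous (f n)
  comm : ∀ n a, f (n + 1) (A.d n a) = B.d n (f n a)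

/-- Composition of chain maps. -/
def ChainMap.comp {A B C : TopComplex} (ψ : ChainMap B C) (φ : ChainMap A B) :
    ChainMap A C where
  f n := (ψ.f n).comp (φ.f n)
  cont n := (ψ.cont n).comp (φ.cont n)
  comm n a := by
    simp only [AddMonoidHom.comp_apply, φ.comm n a, ψ.comm n]

/-- A chain map `φ : A• → B•` is quasi-open if for every `n` the map
`Z^n(A•) ⊕ B^{n-1} → Z^n(B•)`, `(a, b) ↦ φ a − d_B b`, is open. -/
def IsQuasiOpen {A B : TopComplex} (φ : ChainMap A B) : Prop :=
  ∀ n : ℤ, IsOpenMap (fun p : A.Z (n + 1) × B.X n =>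
    (⟨φ.f (n + 1) p.1.1 - B.d n p.2, by
      have h1 : B.d (n + 1) (φ.f (n + 1) p.1.1) = φ.f (n + 1 + 1) (A.d (n + 1) p.1.1) :=
        (φ.comm (n + 1) p.1.1).symm
      simp [map_sub, h1, p.1.2, B.d_comp_d]⟩ : B.Z (n + 1)))

/-- The zero complex `0•`. -/
def zeroComplex : TopComplex where
  X _ := PUnit
  d _ := 0
  d_cont _ := continuous_const
  d_comp_d _ _ := rfl

/-- The zero chain map `0• → Q•`. -/
def zeroChainMap (Q : TopComplex) : ChainMap zeroComplex Q where
  f _ := 0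
  cont _ := continuous_const
  comm _ _ := by simp


open Topology Filter

private lemma isOpenMap_into_subtype {X α : Type} [TopologicalSpace X] [TopologicalSpace α]
    {p : α → Prop} (f : X → {a // p a})
    (h : ∀ x : X, ∀ S ∈ 𝓝 x, ∃ T ∈ 𝓝 ((f x : α)), ∀ z : {a // p a}, (z : α) ∈ T → z ∈ f '' S) :
    IsOpenMap f := by
  rw [isOpenMap_iff_nhds_le]
  intro x A hA
  obtain ⟨T, hT, hTz⟩ := h x (f ⁻¹' A) hA
  rw [nhds_induced Subtype.val (f x), Filter.mem_comap]
  exact ⟨T, hT, fun z hz => Set.image_preimage_subset f A (hTz z hz)⟩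

private lemma hom_quotient_isOpenMap {G H : Type} [AddCommGroup G] [AddCommGroup H]
    [TopologicalSpace G] [TopologicalSpace H] [IsTopologicalAddGroup G]
    (f : G →+ H) (hf : Topology.IsQuotientMap f) : IsOpenMap f := by
  intro O hO
  rw [← hf.isOpen_preimage]
  have heq : f ⁻¹' (f '' O) = ⋃ z ∈ {g : G | f g = 0}, (fun x => x + z) '' O := by
    ext x
    simp only [Set.mem_preimage, Set.mem_image, Set.mem_iUnion, Set.mem_setOf_eq]
    constructor
    · rintro ⟨o, ho, hfo⟩
      exact ⟨x - o, by simp [map_sub, hfo], o, ho, by abel⟩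
    · rintro ⟨z, hz, o, ho, rfl⟩
      exact ⟨o, ho, by simp [map_add, hz]⟩
  rw [heq]
  exact isOpen_biUnion fun z _ => (isOpenMap_add_right z) O hO

private lemma zero_quasiOpen_spec {Q : TopComplex} (hQ : IsQuasiOpen (zeroChainMap Q))
    (m : ℤ) (V : Set (Q.X m)) (hV : IsOpen V) (h0 : (0 : Q.X m) ∈ V) :
    ∃ Ω : Set (Q.X (m + 1)), IsOpen Ω ∧ (0 : Q.X (m + 1)) ∈ Ω ∧
      ∀ q : Q.X (m + 1), Q.d (m + 1) q = 0 → q ∈ Ω → ∃ e ∈ V, q = -(Q.d m e) := by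
  have h := hQ m (Set.univ ×ˢ V) (isOpen_univ.prod hV)
  rw [isOpen_induced_iff] at h
  obtain ⟨Ω, hΩo, hΩeq⟩ := h
  have hmem0 : (0 : Q.X (m + 1)) ∈ Ω := by
    have hz : zeroComplex.d (m + 1) (0 : zeroComplex.X (m + 1)) = 0 := rfl
    have h0im : ((⟨(0 : zeroComplex.X (m + 1)), hz⟩ : zeroComplex.Z (m + 1)), (0 : Q.X m)) ∈
        Set.univ ×ˢ V := ⟨Set.mem_univ _, h0⟩
    have := hΩeq ▸ (Set.mem_image_of_mem _ h0im)
    simpa [zeroChainMap] using this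
  refine ⟨Ω, hΩo, hmem0, fun q hq hqΩ => ?_⟩
  have hmem : (⟨q, hq⟩ : Q.Z (m + 1)) ∈ Subtype.val ⁻¹' Ω := hqΩ
  rw [hΩeq] at hmem
  obtain ⟨p, hp, hpe⟩ := hmem
  refine ⟨p.2, hp.2, ?_⟩
  have hv := congrArg Subtype.val hpe
  simpa [zeroChainMap, eq_comm] using hv

/-- Let `φ : A• → B•` and `ψ : B• → C•` be continuous chain maps of complexes of
abelian topological groups, where `ψ` is a topological embedding (degreewise).
Let `Q• = C•/ψB•` be the quotient complex with quotient topology, presented by a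
chain map `π : C• → Q•` which is degreewise surjective, has kernel equal to the
range of `ψ`, and is degreewise a topological quotient map.  If the zero map
`0• → Q•` is quasi-open, then `ψ` is quasi-open; if in addition `ψ ∘ φ` is
quasi-open, then `φ` is quasi-open. -/

theorem isQuasiOpen_of_embedding {A B C Q : TopComplex}
    (φ : ChainMap A B) (ψ : ChainMap B C) (π : ChainMap C Q)
    (hemb : ∀ n, Topology.IsEmbedding (ψ.f n))
    (hsurj : ∀ n, Function.Surjective (π.f n))
    (hker : ∀ n, (π.f n).ker = (ψ.f n).range)
    (hquot : ∀ n, Topology.IsQuotientMap (π.f n))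
    (hQ : IsQuasiOpen (zeroChainMap Q)) :
    IsQuasiOpen ψ ∧ (IsQuasiOpen (ψ.comp φ) → IsQuasiOpen φ) := by
  have hinj : ∀ n, Function.Injective (ψ.f n) := fun n => (hemb n).injective
  have hπopen : ∀ n, IsOpenMap (π.f n) := fun n => hom_quotient_isOpenMap (π.f n) (hquot n)
  have hker' : ∀ n (c : C.X n), π.f n c = 0 → ∃ b, ψ.f n b = c := by
    intro n c hc
    have h : c ∈ (π.f n).ker := hc
    rw [hker n] at h
    exact h
  constructor
  · -- ψ is quasi-open
    intro n
    apply isOpenMap_into_subtype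
    rintro ⟨b₀, c₀⟩ S hS
    rw [mem_nhds_prod_iff] at hS
    obtain ⟨U, hU, V, hV, hUV⟩ := hS
    rw [nhds_induced Subtype.val b₀, Filter.mem_comap] at hU
    obtain ⟨U₀, hU₀, hU₀sub⟩ := hU
    obtain ⟨U₁, hU₁sub, hU₁o, hU₁m⟩ := mem_nhds_iff.1 hU₀
    obtain ⟨V₁, hV₁sub, hV₁o, hV₁m⟩ := mem_nhds_iff.1 hV
    -- translates to 0
    set U₂ : Set (B.X (n + 1)) := (fun u => b₀.val + u) ⁻¹' U₁ with hU₂def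
    have hU₂o : IsOpen U₂ := hU₁o.preimage (continuous_const.add continuous_id)
    have hU₂0 : (0 : B.X (n + 1)) ∈ U₂ := by simpa [hU₂def] using hU₁m
    set V₂ : Set (C.X n) := (fun v => c₀ + v) ⁻¹' V₁ with hV₂def
    have hV₂o : IsOpen V₂ := hV₁o.preimage (continuous_const.add continuous_id)
    have hV₂0 : (0 : C.X n) ∈ V₂ := by simpa [hV₂def] using hV₁m
    -- embedding
    obtain ⟨TU, hTUo, hTUeq⟩ := (hemb (n + 1)).isInducing.isOpen_iff.1 hU₂o
    have hTU0 : (0 : C.X (n + 1)) ∈ TU := by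
      have h : (0 : B.X (n + 1)) ∈ ψ.f (n + 1) ⁻¹' TU := hTUeq.symm ▸ hU₂0
      simpa using h
    obtain ⟨O, hOo, hO0, hOadd⟩ := exists_open_nhds_zero_add_subset (hTUo.mem_nhds hTU0)
    set V₃ : Set (C.X n) := V₂ ∩ (C.d n) ⁻¹' O with hV₃def
    have hV₃o : IsOpen V₃ := hV₂o.inter (hOo.preimage (C.d_cont n))
    have hV₃0 : (0 : C.X n) ∈ V₃ := ⟨hV₂0, by simpa using hO0⟩
    obtain ⟨Ω, hΩo, hΩ0, hΩspec⟩ := zero_quasiOpen_spec hQ n (π.f n '' V₃)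
      (hπopen n _ hV₃o) ⟨0, hV₃0, map_zero _⟩
    set z₀ : C.X (n + 1) := ψ.f (n + 1) b₀.val - C.d n c₀ with hz₀def
    refine ⟨((fun z => z - z₀) ⁻¹' O) ∩ ((fun z => π.f (n + 1) (z - z₀)) ⁻¹' Ω), ?_, ?_⟩
    · refine IsOpen.mem_nhds
        ((hOo.preimage (continuous_id.sub continuous_const)).inter
          (hΩo.preimage ((π.cont (n + 1)).comp (continuous_id.sub continuous_const)))) ?_
      constructor
      · show ψ.f (n + 1) b₀.val - C.d n c₀ - z₀ ∈ O
        rw [← hz₀def, sub_self]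
        exact hO0
      · show π.f (n + 1) (ψ.f (n + 1) b₀.val - C.d n c₀ - z₀) ∈ Ω
        rw [← hz₀def, sub_self, map_zero]
        exact hΩ0
    · rintro ⟨z, hz⟩ ⟨hzO, hzΩ⟩
      simp only [Set.mem_preimage] at hzO hzΩ
      have hdz₀ : C.d (n + 1) z₀ = 0 := by
        have hcomm := (ψ.comm (n + 1) b₀.val).symm
        simp [hz₀def, map_sub, C.d_comp_d, hcomm, b₀.2]
      have hdw : C.d (n + 1) (z - z₀) = 0 := by simp [map_sub, hz, hdz₀]
      have hdq : Q.d (n + 1) (π.f (n + 1) (z - z₀)) = 0 := by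
        rw [← π.comm (n + 1) (z - z₀), hdw, map_zero]
      obtain ⟨e', he'V, he'eq⟩ := hΩspec _ hdq hzΩ
      obtain ⟨c₁, hc₁V₃, rfl⟩ := he'V
      have hker0 : π.f (n + 1) (z - z₀ + C.d n c₁) = 0 := by
        rw [map_add, π.comm n c₁, he'eq, neg_add_cancel]
      obtain ⟨b₁, hb₁⟩ := hker' (n + 1) _ hker0
      have hb₁coc : B.d (n + 1) b₁ = 0 := by
        apply hinj (n + 1 + 1)
        rw [ψ.comm (n + 1) b₁, hb₁, map_zero]
        simp [map_add, hdw, C.d_comp_d]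
      have hψb₁TU : ψ.f (n + 1) b₁ ∈ TU := by
        rw [hb₁]
        exact hOadd (Set.add_mem_add hzO hc₁V₃.2)
      have hb₁U₂ : b₁ ∈ U₂ := by rw [← hTUeq]; exact hψb₁TU
      refine ⟨⟨⟨b₀.val + b₁, by rw [map_add, b₀.2, hb₁coc, add_zero]⟩, c₀ + c₁⟩,
        hUV ⟨hU₀sub (hU₁sub hb₁U₂), hV₁sub hc₁V₃.1⟩, ?_⟩
      apply Subtype.ext
      show ψ.f (n + 1) (b₀.val + b₁) - C.d n (c₀ + c₁) = z
      rw [map_add, map_add, hb₁, hz₀def]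
      abel
  · -- φ is quasi-open
    intro hψφ n
    obtain ⟨m, rfl⟩ : ∃ m : ℤ, n = m + 1 := ⟨n - 1, by ring⟩
    have hπψ : ∀ (k : ℤ) (x : B.X k), π.f k (ψ.f k x) = 0 := by
      intro k x
      have h : ψ.f k x ∈ (ψ.f k).range := ⟨x, rfl⟩
      rw [← hker k] at h
      exact h
    apply isOpenMap_into_subtype
    rintro ⟨a₀, b₀⟩ S hS
    rw [mem_nhds_prod_iff] at hS
    obtain ⟨U, hU, V, hV, hUV⟩ := hS
    rw [nhds_induced Subtype.val a₀, Filter.mem_comap] at hU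
    obtain ⟨U₀, hU₀, hU₀sub⟩ := hU
    obtain ⟨U₁, hU₁sub, hU₁o, hU₁m⟩ := mem_nhds_iff.1 hU₀
    obtain ⟨V₁, hV₁sub, hV₁o, hV₁m⟩ := mem_nhds_iff.1 hV
    set V₂ : Set (B.X (m + 1)) := (fun v => b₀ + v) ⁻¹' V₁ with hV₂def
    have hV₂o : IsOpen V₂ := hV₁o.preimage (continuous_const.add continuous_id)
    have hV₂0 : (0 : B.X (m + 1)) ∈ V₂ := by simpa [hV₂def] using hV₁m
    obtain ⟨W, hWo, hWeq⟩ := (hemb (m + 1)).isInducing.isOpen_iff.1 hV₂o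
    have hW0 : (0 : C.X (m + 1)) ∈ W := by
      have h : (0 : B.X (m + 1)) ∈ ψ.f (m + 1) ⁻¹' W := hWeq.symm ▸ hV₂0
      simpa using h
    obtain ⟨O, hOo, hO0, hOadd⟩ := exists_open_nhds_zero_add_subset (hWo.mem_nhds hW0)
    set V₄ : Set (C.X m) := (C.d m) ⁻¹' O with hV₄def
    have hV₄o : IsOpen V₄ := hOo.preimage (C.d_cont m)
    have hV₄0 : (0 : C.X m) ∈ V₄ := by simpa [hV₄def] using hO0
    obtain ⟨Ω, hΩo, hΩ0, hΩspec⟩ := zero_quasiOpen_spec hQ m (π.f m '' V₄)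
      (hπopen m _ hV₄o) ⟨0, hV₄0, map_zero _⟩
    set O' : Set (C.X (m + 1)) := O ∩ (π.f (m + 1)) ⁻¹' Ω with hO'def
    have hO'o : IsOpen O' := hOo.inter (hΩo.preimage (π.cont (m + 1)))
    have hO'0 : (0 : C.X (m + 1)) ∈ O' := ⟨hO0, by simpa using hΩ0⟩
    set O'' : Set (C.X (m + 1)) := (fun c => ψ.f (m + 1) b₀ + c) '' O' with hO''def
    have hO''o : IsOpen O'' := (isOpenMap_add_left (ψ.f (m + 1) b₀)) O' hO'o
    set U₂ : Set (A.Z (m + 1 + 1)) := Subtype.val ⁻¹' U₁ with hU₂def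
    have hU₂o : IsOpen U₂ := hU₁o.preimage continuous_subtype_val
    have hG := hψφ (m + 1) (U₂ ×ˢ O'') (hU₂o.prod hO''o)
    rw [isOpen_induced_iff] at hG
    obtain ⟨Θ, hΘo, hΘeq⟩ := hG
    refine ⟨(ψ.f (m + 1 + 1)) ⁻¹' Θ, ?_, ?_⟩
    · apply IsOpen.mem_nhds (hΘo.preimage (ψ.cont (m + 1 + 1)))
      show ψ.f (m + 1 + 1) (φ.f (m + 1 + 1) a₀.val - B.d (m + 1) b₀) ∈ Θ
      have hmem : ((a₀, ψ.f (m + 1) b₀) : A.Z (m + 1 + 1) × C.X (m + 1)) ∈ U₂ ×ˢ O'' :=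
        ⟨hU₁m, ⟨0, hO'0, by simp⟩⟩
      have himg := hΘeq ▸ Set.mem_image_of_mem _ hmem
      have hval2 : ψ.f (m + 1 + 1) (φ.f (m + 1 + 1) a₀.val - B.d (m + 1) b₀) =
          ψ.f (m + 1 + 1) (φ.f (m + 1 + 1) a₀.val) - C.d (m + 1) (ψ.f (m + 1) b₀) := by
        rw [map_sub, ψ.comm (m + 1) b₀]
      rw [hval2]
      simpa [ChainMap.comp] using himg
    · rintro ⟨y, hy⟩ hyT
      have hyc : C.d (m + 1 + 1) (ψ.f (m + 1 + 1) y) = 0 := by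
        rw [← ψ.comm (m + 1 + 1) y, hy, map_zero]
      have hmem : (⟨ψ.f (m + 1 + 1) y, hyc⟩ : C.Z (m + 1 + 1)) ∈ Subtype.val ⁻¹' Θ := hyT
      rw [hΘeq] at hmem
      obtain ⟨⟨a, c'⟩, ⟨haU₂, hc'O''⟩, hpe⟩ := hmem
      obtain ⟨c₁, hc₁O', hc'eq⟩ := hc'O''
      have hval := congrArg Subtype.val hpe
      simp only [ChainMap.comp, AddMonoidHom.comp_apply] at hval
      have hc'eq' : ψ.f (m + 1) b₀ + c₁ = c' := hc'eq
      rw [← hc'eq'] at hval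
      -- hval : ψ (φ a) - C.d (ψ b₀ + c₁) = ψ y
      have h1 : C.d (m + 1) (ψ.f (m + 1) b₀) = ψ.f (m + 1 + 1) (B.d (m + 1) b₀) :=
        (ψ.comm (m + 1) b₀).symm
      have hdc₁ : C.d (m + 1) c₁ =
          ψ.f (m + 1 + 1) (φ.f (m + 1 + 1) a.val - B.d (m + 1) b₀ - y) := by
        rw [map_sub, map_sub, ← hval, map_add, h1]
        abel
      have hπdc₁ : Q.d (m + 1) (π.f (m + 1) c₁) = 0 := by
        rw [← π.comm (m + 1) c₁, hdc₁, hπψ]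
      obtain ⟨e', he'V, he'eq⟩ := hΩspec _ hπdc₁ hc₁O'.2
      obtain ⟨e, heV₄, rfl⟩ := he'V
      have hker0 : π.f (m + 1) (c₁ + C.d m e) = 0 := by
        rw [map_add, π.comm m e, he'eq, neg_add_cancel]
      obtain ⟨b₁, hb₁⟩ := hker' (m + 1) _ hker0
      have hψb₁W : ψ.f (m + 1) b₁ ∈ W := by
        rw [hb₁]
        exact hOadd (Set.add_mem_add hc₁O'.1 heV₄)
      have hb₁V₂ : b₁ ∈ V₂ := by rw [← hWeq]; exact hψb₁W
      have hdψb₁ : C.d (m + 1) (ψ.f (m + 1) b₁) = C.d (m + 1) c₁ := by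
        rw [hb₁, map_add, C.d_comp_d, add_zero]
      have hkey : y = φ.f (m + 1 + 1) a.val - B.d (m + 1) (b₀ + b₁) := by
        apply hinj (m + 1 + 1)
        rw [map_sub, ψ.comm (m + 1) (b₀ + b₁), map_add (ψ.f (m + 1)), map_add (C.d (m + 1)),
          hdψb₁, ← hval, map_add (C.d (m + 1))]
      refine ⟨⟨a, b₀ + b₁⟩, hUV ⟨hU₀sub (hU₁sub haU₂), hV₁sub hb₁V₂⟩, ?_⟩
      exact Subtype.ext hkey.symm
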